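/- Let $r \in (0, 1/\sqrt{2}]$ and define $\phi_1(r) = \frac{\pi}{2} + \arctan\left(\frac{1-4r^2}{2\sqrt{2}\sqrt{1-2r^2}}\right)$ (for $r < 1/\sqrt{2}$; $\phi_1(1/\sqrt{2}) = 0$) and $\phi_2(r) = \arccos(1 - 4r^2)$. Define $\Delta l(r) = 2\pi r - r\,\phi_1(r) - \phi_2(r)$. Then $\Delta l(r) > 0$ for all $r \in (0, 1/\sqrt{2}]$. -/

import Mathlib

open Real

noncomputable def φ₁ (r : ℝ) : ℝ :=
  if r = 1 / Real.sqrt 2 then 0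
  else Real.pi / 2 + Real.arctan ((1 - 4 * r ^ 2) / (2 * Real.sqrt 2 * Real.sqrt (1 - 2 * r ^ 2)))

noncomputable def φ₂ (r : ℝ) : ℝ := Real.arccos (1 - 4 * r ^ 2)

noncomputable def Δl (r : ℝ) : ℝ := 2 * Real.pi * r - r * φ₁ r - φ₂ r

lemma sqrt2_lt : Real.sqrt 2 < 1.42 := by
  nlinarith [Real.sq_sqrt (by norm_num : (2:ℝ) ≥ 0), Real.sqrt_nonneg 2]

lemma sqrt2_gt : (1.41 : ℝ) < Real.sqrt 2 := by
  nlinarith [Real.sq_sqrt (by norm_num : (2:ℝ) ≥ 0), Real.sqrt_nonneg 2]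

lemma arctan_le_self {x : ℝ} (hx : 0 ≤ x) : Real.arctan x ≤ x := by
  have h1 : Real.arctan x ≤ Real.tan (Real.arctan x) := by
    apply Real.le_tan _ (Real.arctan_lt_pi_div_two x)
    rw [← Real.arctan_zero]
    exact Real.arctan_strictMono.monotone hx
  rwa [Real.tan_arctan] at h1

-- identity: arccos (1 - 4 r²) = 2 arcsin (√2 r)
lemma phi2_eq1 {r : ℝ} (h0 : 0 ≤ r) (h1 : Real.sqrt 2 * r ≤ 1) :
    φ₂ r = 2 * Real.arcsin (Real.sqrt 2 * r) := by
  have hy0 : 0 ≤ Real.sqrt 2 * r := mul_nonneg (Real.sqrt_nonneg 2) h0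
  have ht0 : 0 ≤ Real.arcsin (Real.sqrt 2 * r) := Real.arcsin_nonneg.2 hy0
  have ht2 : Real.arcsin (Real.sqrt 2 * r) ≤ π / 2 := Real.arcsin_le_pi_div_two _
  have hsin : Real.sin (Real.arcsin (Real.sqrt 2 * r)) = Real.sqrt 2 * r :=
    Real.sin_arcsin (by linarith) h1
  have hcos : Real.cos (2 * Real.arcsin (Real.sqrt 2 * r)) = 1 - 4 * r ^ 2 := by
    rw [Real.cos_two_mul', hsin]
    have h2 : Real.sqrt 2 ^ 2 = 2 := Real.sq_sqrt (by norm_num)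
    have h3 := Real.sin_sq_add_cos_sq (Real.arcsin (Real.sqrt 2 * r))
    rw [hsin] at h3
    nlinarith [h2, h3]
  rw [φ₂, ← hcos, Real.arccos_cos (by linarith) (by linarith)]

-- identity: arccos (1 - 4 r²) = π - 2 arcsin (√(1 - 2 r²))
lemma phi2_eq2 {r : ℝ} (h1 : 0 ≤ 1 - 2 * r ^ 2) :
    φ₂ r = π - 2 * Real.arcsin (Real.sqrt (1 - 2 * r ^ 2)) := by
  set s := Real.sqrt (1 - 2 * r ^ 2) with hs
  have hs0 : 0 ≤ s := Real.sqrt_nonneg _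
  have hs2 : s ^ 2 = 1 - 2 * r ^ 2 := Real.sq_sqrt h1
  have hs1 : s ≤ 1 := by nlinarith
  have ht0 : 0 ≤ Real.arcsin s := Real.arcsin_nonneg.2 hs0
  have ht2 : Real.arcsin s ≤ π / 2 := Real.arcsin_le_pi_div_two _
  have hsin : Real.sin (Real.arcsin s) = s := Real.sin_arcsin (by linarith) hs1
  have hcos : Real.cos (π - 2 * Real.arcsin s) = 1 - 4 * r ^ 2 := by
    rw [Real.cos_pi_sub, Real.cos_two_mul', hsin]
    have h3 := Real.sin_sq_add_cos_sq (Real.arcsin s)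
    rw [hsin] at h3
    nlinarith [hs2, h3]
  rw [φ₂, ← hcos, Real.arccos_cos (by linarith) (by linarith)]

set_option maxHeartbeats 2000000 in
theorem stmt_11 (r : ℝ) (hr : r ∈ Set.Ioc (0 : ℝ) (1 / Real.sqrt 2)) :
    0 < Δl r := by
  obtain ⟨hr0, hr1⟩ := hr
  have hs2pos : (0:ℝ) < Real.sqrt 2 := by positivity
  have hs2sq : Real.sqrt 2 ^ 2 = 2 := Real.sq_sqrt (by norm_num)
  have hr2 : Real.sqrt 2 * r ≤ 1 := by
    have h := mul_le_mul_of_nonneg_left hr1 hs2pos.le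
    rwa [mul_one_div, div_self (ne_of_gt hs2pos)] at h
  have hrsq : 2 * r ^ 2 ≤ 1 := by nlinarith
  have hpi_gt : (3.141592 : ℝ) < π := Real.pi_gt_d6
  have hpi_lt : π < 3.15 := by linarith [Real.pi_lt_d2]
  rcases le_or_gt r (53 / 100) with hc | hc
  · -- Case 1 : r ≤ 0.53
    have hrne : r ≠ 1 / Real.sqrt 2 := by
      intro h
      rw [h] at hc
      rw [div_le_iff₀ hs2pos] at hc
      nlinarith [sqrt2_lt]
    have hsub : 0 ≤ 1 - 2 * r ^ 2 := by nlinarith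
    have hsr0 : 0 < Real.sqrt (1 - 2 * r ^ 2) := by
      apply Real.sqrt_pos.2
      nlinarith [sqrt2_gt]
    -- φ₁ bound
    have hu : (1 - 4 * r ^ 2) / (2 * Real.sqrt 2 * Real.sqrt (1 - 2 * r ^ 2))
        ≤ Real.sqrt 2 / 4 := by
      have hnum : 1 - 4 * r ^ 2 ≤ Real.sqrt (1 - 2 * r ^ 2) := by
        have h1 : 1 - 2 * r ^ 2 ≤ Real.sqrt (1 - 2 * r ^ 2) := by
          nlinarith [Real.sq_sqrt hsub, Real.sqrt_nonneg (1 - 2 * r ^ 2),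
            Real.sqrt_le_one.2 (by nlinarith [sq_nonneg r] : (1 - 2*r^2) ≤ 1)]
        nlinarith
      rw [div_le_div_iff₀ (by positivity) (by norm_num)]
      nlinarith [hsr0, hs2sq, Real.sqrt_nonneg (1 - 2 * r ^ 2)]
    have hφ1 : φ₁ r ≤ π / 2 + Real.sqrt 2 / 4 := by
      rw [φ₁, if_neg hrne]
      have := arctan_le_self (x := Real.sqrt 2 / 4) (by positivity)
      have hmono := Real.arctan_strictMono.monotone hu
      linarith
    -- φ₂ bound
    have hy1 : Real.sqrt 2 * r ≤ 3 / 4 := by nlinarith [sqrt2_lt]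
    have hsin1 : (3:ℝ)/4 < Real.sin 1 := by
      have := Real.sin_gt_sub_cube (x := 1) one_pos
      linarith
    set t := Real.arcsin (Real.sqrt 2 * r) with ht
    have ht0 : 0 < t := Real.arcsin_pos.2 (mul_pos hs2pos hr0)
    have ht1 : t ≤ 1 := by
      have h1 : Real.arcsin (Real.sin 1) = 1 := by
        apply Real.arcsin_sin <;> nlinarith [Real.pi_gt_three]
      rw [ht, ← h1]
      exact Real.monotone_arcsin (by linarith)
    have hsint : Real.sin t = Real.sqrt 2 * r :=
      Real.sin_arcsin (by nlinarith [mul_pos hs2pos hr0]) hr2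
    have htlt : t < 4 / 3 * (Real.sqrt 2 * r) := by
      have hcube : t ^ 3 ≤ t := by nlinarith [sq_nonneg t]
      have := Real.sin_gt_sub_cube ht0
      linarith [hsint ▸ this]
    have hφ2 : φ₂ r < 8 / 3 * (Real.sqrt 2 * r) := by
      rw [phi2_eq1 hr0.le hr2, ← ht]
      linarith
    -- combine
    have hφ1' : r * φ₁ r ≤ r * (π / 2 + Real.sqrt 2 / 4) :=
      mul_le_mul_of_nonneg_left hφ1 hr0.le
    have hcoef : (0:ℝ) < 3/2 * π - 35/12 * Real.sqrt 2 := by nlinarith [sqrt2_lt]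
    have hmain := mul_pos hr0 hcoef
    rw [Δl]
    nlinarith [hmain, hφ2, hφ1']
  · -- Case 2 : 0.53 < r
    set s := Real.sqrt (1 - 2 * r ^ 2) with hsdef
    have hsub : 0 ≤ 1 - 2 * r ^ 2 := by nlinarith
    have hs0 : 0 ≤ s := Real.sqrt_nonneg _
    have hssq : s ^ 2 = 1 - 2 * r ^ 2 := Real.sq_sqrt hsub
    have hs1 : s ≤ 1 := by nlinarith
    -- φ₁ bound
    have hφ1 : φ₁ r ≤ π / 2 := by
      rw [φ₁]
      split_ifs with h
      · linarith [Real.pi_pos]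
      · have hnum : 1 - 4 * r ^ 2 ≤ 0 := by nlinarith
        have hden : 0 ≤ 2 * Real.sqrt 2 * Real.sqrt (1 - 2 * r ^ 2) := by positivity
        have : Real.arctan ((1 - 4 * r ^ 2) / (2 * Real.sqrt 2 * Real.sqrt (1 - 2 * r ^ 2)))
            ≤ 0 := by
          rw [← Real.arctan_zero]
          exact Real.arctan_strictMono.monotone (div_nonpos_iff.2 (Or.inr ⟨hnum, hden⟩))
        linarith
    -- φ₂ bound
    have harc : s ≤ Real.arcsin s := by
      have h1 : Real.sin (Real.arcsin s) = s := Real.sin_arcsin (by linarith) hs1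
      have h2 := Real.sin_le (Real.arcsin_nonneg.2 hs0)
      linarith
    have hφ2 : φ₂ r ≤ π - 2 * s := by
      rw [phi2_eq2 hsub]
      linarith
    have hφ1' : r * φ₁ r ≤ r * (π / 2) :=
      mul_le_mul_of_nonneg_left hφ1 hr0.le
    rw [Δl]
    have hkey : π < 3 / 2 * π * r + 2 * s := by
      nlinarith [sq_nonneg (s - 1/10), sq_nonneg (r - 7/10), hssq, hs0, hc, hpi_gt, hpi_lt]
    linarith
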